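/- Let M̃ be the positive-definite matrix M̃_{kl} = c(c/2−1)(wₖ/σₖ)δ_{kl} + (c²/2)(V^{-1})_{kl} σₖ^{c/2−1} σₗ^{c/2−1}, where c > 1, V is positive definite, wₖ > 0, and the σₖ > 0 satisfy Σⱼ (V^{-1})_{jk} σⱼ^{c/2} σₖ^{c/2−1} = wₖ for all k. Then w^T M̃^{-1} w = (1/(c(c−1))) Σⱼ wⱼσⱼ. -/

import Mathlib

open Finset Matrix

/-- Quadratic-form identity for the Hessian matrix `M̃` arising in the Laplace expansion:
if `M̃_{kl} = c(c/2-1)(wₖ/σₖ)δ_{kl} + (c²/2)(V⁻¹)_{kl} σₖ^{c/2-1} σₗ^{c/2-1}` is positive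
definite and the positive `σₖ` satisfy `∑ⱼ (V⁻¹)_{jk} σⱼ^{c/2} σₖ^{c/2-1} = wₖ`,
then `wᵀ M̃⁻¹ w = (1/(c(c-1))) ∑ⱼ wⱼσⱼ`. -/
theorem stmt_19 (N : ℕ) (V : Matrix (Fin N) (Fin N) ℝ) (hV : V.PosDef)
    (c : ℝ) (hc : 1 < c) (w σ : Fin N → ℝ) (hw : ∀ k, 0 < w k) (hσ : ∀ k, 0 < σ k)
    (hdef : ∀ k, ∑ j, V⁻¹ j k * σ j ^ (c/2) * σ k ^ (c/2 - 1) = w k)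
    (M : Matrix (Fin N) (Fin N) ℝ)
    (hM : M = Matrix.of fun k l =>
      (if k = l then c * (c/2 - 1) * (w k / σ k) else 0)
        + c ^ 2 / 2 * V⁻¹ k l * σ k ^ (c/2 - 1) * σ l ^ (c/2 - 1))
    (hMpd : M.PosDef) :
    w ⬝ᵥ (M⁻¹ *ᵥ w) = (1/(c * (c - 1))) * ∑ j, w j * σ j := by
  have hc0 : (0:ℝ) < c := lt_trans one_pos hc
  have hcc : c * (c - 1) ≠ 0 := mul_ne_zero (ne_of_gt hc0) (ne_of_gt (by linarith))
  have hVsymm : V⁻¹.IsHermitian := hV.isHermitian.inv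
  have hsym : ∀ k l, V⁻¹ k l = V⁻¹ l k := fun k l => (hVsymm.apply l k).trans (star_trivial _)
  -- key: M *ᵥ σ = (c (c-1)) • w
  have hMσ : M *ᵥ σ = (c * (c - 1)) • w := by
    funext k
    have hx : ∀ l, σ l ^ (c/2 - 1) * σ l = σ l ^ (c/2) := by
      intro l
      nth_rewrite 2 [← Real.rpow_one (σ l)]
      rw [← Real.rpow_add (hσ l)]
      norm_num
    have : (M *ᵥ σ) k
        = ∑ l, ((if k = l then c * (c/2 - 1) * (w k / σ k) else 0) * σ l
          + c ^ 2 / 2 * (V⁻¹ l k * σ l ^ (c/2) * σ k ^ (c/2 - 1))) := by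
      rw [hM]
      simp only [Matrix.mulVec, dotProduct, Matrix.of_apply]
      refine Finset.sum_congr rfl fun l _ => ?_
      rw [add_mul, hsym k l, ← hx l]
      ring
    rw [this, Finset.sum_add_distrib]
    simp only [ite_mul, zero_mul, Finset.sum_ite_eq, Finset.mem_univ, if_true]
    rw [← Finset.mul_sum, hdef k]
    have hσk : σ k ≠ 0 := ne_of_gt (hσ k)
    rw [Pi.smul_apply, smul_eq_mul]
    field_simp
    ring
  -- invertibility
  have hdet : IsUnit M.det := isUnit_iff_ne_zero.mpr (ne_of_gt hMpd.det_pos)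
  have hinv : M⁻¹ *ᵥ (M *ᵥ σ) = σ := by
    rw [Matrix.mulVec_mulVec, Matrix.nonsing_inv_mul M hdet, Matrix.one_mulVec]
  rw [hMσ, Matrix.mulVec_smul] at hinv
  have hMw : M⁻¹ *ᵥ w = (c * (c - 1))⁻¹ • σ := by
    rw [← hinv, smul_smul, inv_mul_cancel₀ hcc, one_smul]
  rw [hMw, dotProduct_smul]
  simp only [smul_eq_mul, one_div, dotProduct]
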